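/- Let f = (f_0, …, f_n) : Δ → ℝ^{n+1} be uniformly continuous, satisfy the Walras law, and be sequentially locally non-constant. Then the map φ : Δ → Δ defined by φ_i(p) = (p_i + max(f_i(p), 0)) / (1 + Σ_{j=0}^n max(f_j(p), 0)) is sequentially locally non-constant as a self-map of Δ: there exists ε̄ > 0 such that for each ε with 0 < ε ≤ ε̄ there exist finitely many nonempty closed subsets H_1, …, H_m of Δ, each of diameter at most ε, covering Δ, such that for each i and all sequences (p_k), (q_k) in H_i, if |φ(p_k) − p_k| → 0 and |φ(q_k) − q_k| → 0, then |p_k − q_k| → 0. -/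

import Mathlib

open Filter Topology

noncomputable section

/-- The ambient Euclidean space `ℝ^{n+1}`. -/
abbrev E (n : ℕ) := EuclideanSpace ℝ (Fin (n + 1))

/-- The standard `n`-dimensional simplex in `ℝ^{n+1}` with the Euclidean metric. -/
def simplexE (n : ℕ) : Set (E n) := {p | (∀ i, 0 ≤ p i) ∧ ∑ i, p i = 1}

lemma coord_abs_le_norm {n : ℕ} (x : E n) (j : Fin (n+1)) : |x j| ≤ ‖x‖ := by
  rw [EuclideanSpace.norm_eq]
  have h1 : |x j| = Real.sqrt (‖x j‖ ^ 2) := by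
    rw [Real.sqrt_sq_eq_abs, Real.norm_eq_abs, abs_abs]
  rw [h1]
  apply Real.sqrt_le_sqrt
  exact Finset.single_le_sum (f := fun i => ‖x i‖ ^ 2) (fun i _ => sq_nonneg _)
    (Finset.mem_univ j)

lemma simplex_compact (n : ℕ) : IsCompact (simplexE n) := by
  apply Metric.isCompact_of_isClosed_isBounded
  · have h1 : simplexE n = (⋂ i, {p : E n | 0 ≤ p i}) ∩ {p : E n | ∑ i, p i = 1} := by
      ext p; simp [simplexE, Set.mem_iInter]
    rw [h1]
    refine IsClosed.inter (isClosed_iInter fun i => ?_) ?_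
    · exact isClosed_le continuous_const (PiLp.continuous_apply 2 _ i)
    · exact isClosed_eq (continuous_finset_sum _ fun i _ => PiLp.continuous_apply 2 _ i)
        continuous_const
  · rw [Metric.isBounded_iff_subset_closedBall 0]
    refine ⟨1, fun p hp => ?_⟩
    obtain ⟨hpos, hsum⟩ := hp
    simp only [Metric.mem_closedBall, dist_zero_right]
    rw [EuclideanSpace.norm_eq]
    have hle : ∀ i, p i ≤ 1 := by
      intro i
      calc p i ≤ ∑ j, p j := Finset.single_le_sum (fun j _ => hpos j) (Finset.mem_univ i)
        _ = 1 := hsum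
    have : ∑ i, ‖p i‖ ^ 2 ≤ 1 := by
      calc ∑ i, ‖p i‖ ^ 2 ≤ ∑ i, p i := by
            apply Finset.sum_le_sum
            intro i _
            rw [Real.norm_eq_abs, sq_abs]
            nlinarith [hpos i, hle i]
        _ = 1 := hsum
    calc Real.sqrt (∑ i, ‖p i‖ ^ 2) ≤ Real.sqrt 1 := Real.sqrt_le_sqrt this
      _ = 1 := Real.sqrt_one

lemma key_fix_to_ed (n : ℕ) (f : E n → E n) (M : ℝ) (hM0 : 0 ≤ M)
    (hM : ∀ p ∈ simplexE n, ∀ j, |f p j| ≤ M)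
    (hwalras : ∀ p ∈ simplexE n, ∑ i, p i * f p i = 0)
    (φ : E n → E n)
    (hφ : ∀ p i, φ p i = (p i + max (f p i) 0) / (1 + ∑ j, max (f p j) 0))
    (p : ℕ → E n) (hp : ∀ k, p k ∈ simplexE n)
    (h : Tendsto (fun k => dist (φ (p k)) (p k)) atTop (nhds 0)) :
    ∀ j, Tendsto (fun k => max (f (p k) j) 0) atTop (nhds 0) := by
  set S : E n → ℝ := fun q => ∑ j, max (f q j) 0 with hS
  have hS0 : ∀ q, 0 ≤ S q := fun q =>
    Finset.sum_nonneg fun j _ => le_max_right _ _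
  have hSle : ∀ q ∈ simplexE n, S q ≤ (n + 1) * M := by
    intro q hq
    calc S q ≤ ∑ _j : Fin (n+1), M := by
          apply Finset.sum_le_sum
          intro j _
          rcases le_or_gt (f q j) 0 with h' | h'
          · rw [max_eq_right h']; exact hM0
          · rw [max_eq_left h'.le]
            exact (abs_le.mp (hM q hq j)).2
      _ = (n + 1) * M := by
          rw [Finset.sum_const, Finset.card_univ, Fintype.card_fin, nsmul_eq_mul]
          push_cast; ring
  have hSpos : ∀ q, (0:ℝ) < 1 + S q := fun q => by linarith [hS0 q]
  -- g j q = max (f q j) 0 - q j * S q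
  set g : Fin (n+1) → E n → ℝ := fun j q => max (f q j) 0 - q j * S q with hg
  have hgφ : ∀ q j, g j q = (1 + S q) * (φ q j - q j) := by
    intro q j
    have hne : (1 + S q) ≠ 0 := (hSpos q).ne'
    rw [hφ]
    field_simp
    ring
  -- Step 1: g j (p k) → 0
  have hgtend : ∀ j, Tendsto (fun k => g j (p k)) atTop (nhds 0) := by
    intro j
    have hbound : ∀ k, |g j (p k)| ≤ (1 + (n + 1) * M) * dist (φ (p k)) (p k) := by
      intro k
      rw [hgφ]
      rw [abs_mul]
      have h1 : |1 + S (p k)| = 1 + S (p k) := abs_of_pos (hSpos _)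
      rw [h1]
      have h2 : |φ (p k) j - p k j| ≤ dist (φ (p k)) (p k) := by
        rw [dist_eq_norm]
        exact (coord_abs_le_norm (φ (p k) - p k) j).trans_eq' (by simp)
      have h3 : 1 + S (p k) ≤ 1 + (n + 1) * M := by linarith [hSle _ (hp k)]
      have := mul_le_mul h3 h2 (abs_nonneg _) (by positivity)
      linarith
    rw [tendsto_zero_iff_abs_tendsto_zero]
    apply squeeze_zero (fun k => abs_nonneg _) hbound
    simpa using h.const_mul (1 + (n + 1) * M)
  -- Step 2: ∑ j max² → 0
  have hident : ∀ q ∈ simplexE n,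
      ∑ j, max (f q j) 0 ^ 2 = ∑ j, f q j * g j q := by
    intro q hq
    have : ∑ j, f q j * g j q
        = ∑ j, f q j * max (f q j) 0 - S q * ∑ j, q j * f q j := by
      rw [Finset.mul_sum, ← Finset.sum_sub_distrib]
      apply Finset.sum_congr rfl
      intro j _
      simp only [hg]
      ring
    rw [this, hwalras q hq, mul_zero, sub_zero]
    apply Finset.sum_congr rfl
    intro j _
    rcases le_or_gt (f q j) 0 with h' | h'
    · rw [max_eq_right h']; simp
    · rw [max_eq_left h'.le]; ring
  have hsumtend : Tendsto (fun k => ∑ j, max (f (p k) j) 0 ^ 2) atTop (nhds 0) := by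
    apply squeeze_zero (g := fun k => ∑ j, M * |g j (p k)|)
    · intro k
      exact Finset.sum_nonneg fun j _ => sq_nonneg _
    · intro k
      rw [hident _ (hp k)]
      apply Finset.sum_le_sum
      intro j _
      calc f (p k) j * g j (p k) ≤ |f (p k) j * g j (p k)| := le_abs_self _
        _ = |f (p k) j| * |g j (p k)| := abs_mul _ _
        _ ≤ M * |g j (p k)| :=
            mul_le_mul_of_nonneg_right (hM _ (hp k) j) (abs_nonneg _)
    · have : ∀ j : Fin (n+1), Tendsto (fun k => M * |g j (p k)|) atTop (nhds 0) := by
        intro j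
        have := (hgtend j).abs.const_mul M
        simpa using this
      have := tendsto_finset_sum Finset.univ (fun j _ => this j)
      simpa using this
  -- Step 3: each max → 0
  intro j
  have hsq : Tendsto (fun k => max (f (p k) j) 0 ^ 2) atTop (nhds 0) := by
    apply squeeze_zero (fun k => sq_nonneg _) _ hsumtend
    intro k
    exact Finset.single_le_sum (f := fun j => max (f (p k) j) 0 ^ 2)
      (fun i _ => sq_nonneg _) (Finset.mem_univ j)
  have := (Real.continuous_sqrt.tendsto 0).comp hsq
  simp only [Real.sqrt_zero] at this
  convert this using 2 with k
  simp only [Function.comp_apply]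
  rw [Real.sqrt_sq (le_max_right _ _)]

/-- The excess demand function `f` is sequentially locally non-constant (in terms of
`max (f_j , 0) → 0`). -/
def SeqLocNonConstED (n : ℕ) (f : E n → E n) : Prop :=
  ∃ εbar > (0 : ℝ), ∀ ε : ℝ, 0 < ε → ε ≤ εbar →
    ∃ (m : ℕ) (H : Fin m → Set (E n)),
      (∀ i, H i ⊆ simplexE n ∧ (H i).Nonempty ∧ IsClosed (H i) ∧ Metric.diam (H i) ≤ ε) ∧
      simplexE n = (⋃ i, H i) ∧
      ∀ i, ∀ p q : ℕ → E n, (∀ k, p k ∈ H i) → (∀ k, q k ∈ H i) →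
        (∀ j, Tendsto (fun k => max (f (p k) j) 0) atTop (nhds 0)) →
        (∀ j, Tendsto (fun k => max (f (q k) j) 0) atTop (nhds 0)) →
        Tendsto (fun k => dist (p k) (q k)) atTop (nhds 0)

/-- The self-map `φ` is sequentially locally non-constant (in terms of
`|φ(p) − p| → 0`). -/
def SeqLocNonConstFix (n : ℕ) (φ : E n → E n) : Prop :=
  ∃ εbar > (0 : ℝ), ∀ ε : ℝ, 0 < ε → ε ≤ εbar →
    ∃ (m : ℕ) (H : Fin m → Set (E n)),
      (∀ i, H i ⊆ simplexE n ∧ (H i).Nonempty ∧ IsClosed (H i) ∧ Metric.diam (H i) ≤ ε) ∧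
      simplexE n = (⋃ i, H i) ∧
      ∀ i, ∀ p q : ℕ → E n, (∀ k, p k ∈ H i) → (∀ k, q k ∈ H i) →
        Tendsto (fun k => dist (φ (p k)) (p k)) atTop (nhds 0) →
        Tendsto (fun k => dist (φ (q k)) (q k)) atTop (nhds 0) →
        Tendsto (fun k => dist (p k) (q k)) atTop (nhds 0)

/-- If `f` is uniformly continuous, satisfies the Walras law and is sequentially locally
non-constant, then `φ_i(p) = (p_i + max(f_i(p), 0)) / (1 + Σ_j max(f_j(p), 0))` is a
sequentially locally non-constant self-map of the simplex. -/
theorem phi_seqLocNonConst (n : ℕ) (f : E n → E n)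
    (huc : UniformContinuousOn f (simplexE n))
    (hwalras : ∀ p ∈ simplexE n, ∑ i, p i * f p i = 0)
    (hslnc : SeqLocNonConstED n f)
    (φ : E n → E n)
    (hφ : ∀ p i, φ p i = (p i + max (f p i) 0) / (1 + ∑ j, max (f p j) 0)) :
    SeqLocNonConstFix n φ := by
  obtain ⟨M, hMle⟩ := (simplex_compact n).exists_bound_of_continuousOn huc.continuousOn
  have hM : ∀ p ∈ simplexE n, ∀ j, |f p j| ≤ max M 0 := fun p hp j =>
    (coord_abs_le_norm (f p) j).trans ((hMle p hp).trans (le_max_left _ _))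
  obtain ⟨εbar, hεb, hH⟩ := hslnc
  refine ⟨εbar, hεb, fun ε hε hεb' => ?_⟩
  obtain ⟨m, H, h1, h2, h3⟩ := hH ε hε hεb'
  refine ⟨m, H, h1, h2, fun i p q hpH hqH hp' hq' => ?_⟩
  exact h3 i p q hpH hqH
    (key_fix_to_ed n f (max M 0) (le_max_right _ _) hM hwalras φ hφ p
      (fun k => (h1 i).1 (hpH k)) hp')
    (key_fix_to_ed n f (max M 0) (le_max_right _ _) hM hwalras φ hφ q
      (fun k => (h1 i).1 (hqH k)) hq')
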